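/- For a sequence of n > 2 i.i.d. Bernoulli(p) trials with 0 < p < 1, the expected value of the difference between the proportion of successes on trials immediately following a success and the proportion of successes on trials immediately following a failure, conditional on both proportions being defined, equals −1/(n−1). -/

import Mathlib

open Finset

/-- Probability weight of a Bernoulli(p) binary sequence. -/
def wgt {n : ℕ} (p : ℝ) (x : Fin n → Bool) : ℝ :=
  ∏ i, if x i then p else 1 - p

/-- The set of trials that immediately follow `k` consecutive successes. -/
def streakSet {n : ℕ} (k : ℕ) (x : Fin n → Bool) : Finset (Fin n) :=
  Finset.univ.filter (fun i : Fin n =>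
    k ≤ i.val ∧ ∀ j : Fin n, i.val - k ≤ j.val → j.val < i.val → x j = true)

/-- The proportion of successes on the trials that immediately follow `k`
consecutive successes. -/
noncomputable def phat {n : ℕ} (k : ℕ) (x : Fin n → Bool) : ℝ :=
  (∑ i ∈ streakSet k x, if x i then (1:ℝ) else 0) / ((streakSet k x).card : ℝ)

/-- Number of successes in the sequence. -/
def ones {n : ℕ} (x : Fin n → Bool) : ℕ :=
  (Finset.univ.filter (fun i => x i = true)).card

namespace MS
variable {n : ℕ} [NeZero n]

lemma sub_one_val (i : Fin n) (h : 1 ≤ i.val) : (i - 1).val = i.val - 1 := by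
  have hn : 0 < n := Nat.pos_of_ne_zero (NeZero.ne n)
  rw [Fin.sub_def]
  simp only [Fin.val_one']
  rw [Nat.one_mod_eq_one.mpr (by omega)]
  have : n - 1 + i.val = (i.val - 1) + n := by omega
  rw [this, Nat.add_mod_right, Nat.mod_eq_of_lt (by omega)]

lemma add_one_val (j : Fin n) (h : j.val + 1 < n) : (j + 1).val = j.val + 1 := by
  have hn : 0 < n := Nat.pos_of_ne_zero (NeZero.ne n)
  rw [Fin.add_def]
  simp only [Fin.val_one']
  rw [Nat.one_mod_eq_one.mpr (by omega), Nat.mod_eq_of_lt (by omega)]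

lemma mem_streak (x : Fin n → Bool) (i : Fin n) :
    i ∈ streakSet 1 x ↔ 1 ≤ i.val ∧ x (i - 1) = true := by
  simp only [streakSet, mem_filter, mem_univ, true_and]
  constructor
  · rintro ⟨h1, h2⟩
    exact ⟨h1, h2 (i - 1) (by rw [sub_one_val i h1]) (by rw [sub_one_val i h1]; omega)⟩
  · rintro ⟨h1, h2⟩
    refine ⟨h1, fun j hj1 hj2 => ?_⟩
    have : j = i - 1 := by
      apply Fin.ext; rw [sub_one_val i h1]; omega
    rwa [this]

/-- the set of "predecessor" positions -/
def F (n : ℕ) : Finset (Fin n) := Finset.univ.filter (fun j => j.val + 1 < n)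

def aa (t : Bool) (x : Fin n → Bool) : ℕ := ((F n).filter (fun j => x j = t)).card

def cnt (t u : Bool) (x : Fin n → Bool) : ℕ :=
  ((F n).filter (fun j => x j = t ∧ x (j + 1) = u)).card

lemma add_sub_one (j : Fin n) (h : j.val + 1 < n) : j + 1 - 1 = j := by
  apply Fin.ext
  rw [sub_one_val _ (by rw [add_one_val j h]; omega), add_one_val j h]
  omega

lemma streak_filter_card (y : Fin n → Bool) (P : Fin n → Prop) [DecidablePred P] :
    ((streakSet 1 y).filter P).card
      = ((F n).filter (fun j => (y j = true ∧ j.val + 1 < n) ∧ P (j + 1))).card := by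
  apply Finset.card_nbij' (fun i => i - 1) (fun j => j + 1)
  · intro i hi
    simp only [mem_coe, mem_filter, mem_streak] at hi
    obtain ⟨⟨h1, h2⟩, h3⟩ := hi
    have hv : (i - 1).val = i.val - 1 := sub_one_val i h1
    have hlt : (i - 1).val + 1 < n := by rw [hv]; omega
    have : (i - 1) + 1 = i := by
      apply Fin.ext; rw [add_one_val _ hlt, hv]; omega
    simp only [mem_coe, F, mem_filter, mem_univ, true_and, filter_filter]
    exact ⟨hlt, ⟨h2, hlt⟩, by rwa [this]⟩
  · intro j hj
    simp only [mem_coe, F, mem_filter, mem_univ, true_and, filter_filter] at hj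
    obtain ⟨h0, ⟨h1, h2⟩, h3⟩ := hj
    simp only [mem_coe, mem_filter, mem_streak]
    refine ⟨⟨by rw [add_one_val j h2]; omega, by rwa [add_sub_one j h2]⟩, h3⟩
  · intro i hi
    simp only [mem_coe, mem_filter, mem_streak] at hi
    obtain ⟨⟨h1, _⟩, _⟩ := hi
    have hv : (i - 1).val = i.val - 1 := sub_one_val i h1
    apply Fin.ext; rw [add_one_val _ (by rw [hv]; omega), hv]; omega
  · intro j hj
    simp only [mem_coe, F, mem_filter, mem_univ, true_and, filter_filter] at hj
    exact add_sub_one j hj.1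

lemma streak_card (y : Fin n → Bool) :
    (streakSet 1 y).card = ((F n).filter (fun j => y j = true)).card := by
  have := streak_filter_card y (fun _ => True)
  simpa only [filter_true_of_mem (fun _ _ => trivial), and_true] using
    this.trans (by
      apply Finset.card_nbij' id id <;> intro a ha <;>
        simp only [mem_coe, F, mem_filter, mem_univ, true_and, id] at * <;> tauto)

lemma streak_sum (y : Fin n → Bool) :
    (∑ i ∈ streakSet 1 y, if y i then (1:ℝ) else 0)
      = (((F n).filter (fun j => y j = true ∧ y (j + 1) = true)).card : ℝ) := by
  rw [Finset.sum_boole]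
  norm_cast
  rw [streak_filter_card y (fun i => y i = true)]
  apply Finset.card_nbij' id id <;> intro a ha <;>
    simp only [mem_coe, F, mem_filter, mem_univ, true_and, id] at * <;> tauto


lemma phat_eq (x : Fin n → Bool) :
    phat 1 x = (cnt true true x : ℝ) / (aa true x : ℝ) := by
  rw [phat, streak_sum, streak_card]; rfl

lemma phat_not_eq (x : Fin n → Bool) :
    phat 1 (fun i => !x i) = (cnt false false x : ℝ) / (aa false x : ℝ) := by
  rw [phat, streak_sum, streak_card]
  have h1 : (F n).filter (fun j => (!x j) = true ∧ (!x (j+1)) = true)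
      = (F n).filter (fun j => x j = false ∧ x (j+1) = false) := by
    apply filter_congr; intro j _; simp
  have h2 : (F n).filter (fun j => (!x j) = true) = (F n).filter (fun j => x j = false) := by
    apply filter_congr; intro j _; simp
  rw [h1, h2]; rfl

def Ev (x : Fin n → Bool) : Prop := 0 < aa true x ∧ 0 < aa false x

instance (x : Fin n → Bool) : Decidable (Ev x) := by unfold Ev; infer_instance

lemma event_iff (x : Fin n → Bool) :
    ((streakSet 1 x).Nonempty ∧ (streakSet 1 (fun i => !x i)).Nonempty) ↔ Ev x := by
  rw [← Finset.card_pos, ← Finset.card_pos, streak_card, streak_card]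
  have h2 : (F n).filter (fun j => (!x j) = true) = (F n).filter (fun j => x j = false) := by
    apply filter_congr; intro j _; simp
  rw [h2]
  rfl

lemma cnt_split (t : Bool) (x : Fin n → Bool) :
    cnt t true x + cnt t false x = aa t x := by
  unfold cnt aa
  have h1 : (F n).filter (fun j => x j = t ∧ x (j+1) = true)
      = ((F n).filter (fun j => x j = t)).filter (fun j => x (j+1) = true) := by
    rw [filter_filter]
  have h2 : (F n).filter (fun j => x j = t ∧ x (j+1) = false)
      = ((F n).filter (fun j => x j = t)).filter (fun j => ¬ (x (j+1) = true)) := by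
    rw [filter_filter]
    apply filter_congr; intro j _; simp
  rw [h1, h2, Finset.card_filter_add_card_filter_not]

lemma pointwise (x : Fin n → Bool) (h : Ev x) :
    phat 1 x - (1 - phat 1 (fun i => !x i))
      = 1 - (cnt true false x : ℝ) / (aa true x : ℝ)
          - (cnt false true x : ℝ) / (aa false x : ℝ) := by
  rw [phat_eq, phat_not_eq]
  obtain ⟨h1, h2⟩ := h
  have a1 : (aa true x : ℝ) ≠ 0 := Nat.cast_ne_zero.mpr h1.ne'
  have a2 : (aa false x : ℝ) ≠ 0 := Nat.cast_ne_zero.mpr h2.ne'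
  have e1 : (cnt true true x : ℝ) = (aa true x : ℝ) - (cnt true false x : ℝ) := by
    have := cnt_split true x; push_cast [← this]; ring
  have e2 : (cnt false false x : ℝ) = (aa false x : ℝ) - (cnt false true x : ℝ) := by
    have := cnt_split false x; push_cast [← this]; ring
  rw [e1, e2]
  field_simp
  ring


def lst : Fin n := ⟨n - 1, by have := Nat.pos_of_ne_zero (NeZero.ne n); omega⟩

lemma lt_iff_ne_lst (j : Fin n) : j.val + 1 < n ↔ j ≠ lst := by
  have hj := j.isLt
  constructor
  · intro h hq; rw [hq] at h; simp [lst] at h; omega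
  · intro h
    have : j.val ≠ n - 1 := fun hc => h (Fin.ext (by simp [lst, hc]))
    omega

lemma wgt_comp (p : ℝ) (σ : Equiv.Perm (Fin n)) (x : Fin n → Bool) :
    wgt p (x ∘ σ) = wgt p x := by
  unfold wgt
  exact Equiv.prod_comp σ (fun i => if x i then p else 1 - p)

lemma ne_lst_comp (σ : Equiv.Perm (Fin n)) (hσ : σ lst = lst) (j : Fin n) :
    (σ j).val + 1 < n ↔ j.val + 1 < n := by
  rw [lt_iff_ne_lst, lt_iff_ne_lst]
  constructor
  · intro h hc; rw [hc] at h; exact h hσ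
  · intro h hc; exact h (σ.injective (hc.trans hσ.symm))

lemma aa_comp (t : Bool) (σ : Equiv.Perm (Fin n)) (hσ : σ lst = lst) (x : Fin n → Bool) :
    aa t (x ∘ σ) = aa t x := by
  unfold aa F
  rw [filter_filter, filter_filter]
  apply Finset.card_nbij' (fun j => σ j) (fun j => σ.symm j)
  · intro j hj
    simp only [mem_coe, mem_filter, mem_univ, true_and, Function.comp] at *
    exact ⟨(ne_lst_comp σ hσ j).mpr hj.1, hj.2⟩
  · intro j hj
    simp only [mem_coe, mem_filter, mem_univ, true_and, Function.comp] at *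
    constructor
    · have h2 := ne_lst_comp σ hσ (σ.symm j)
      rw [Equiv.apply_symm_apply] at h2
      exact h2.mp hj.1
    · simpa using hj.2
  · intro j _; simp
  · intro j _; simp

lemma Ev_comp (σ : Equiv.Perm (Fin n)) (hσ : σ lst = lst) (x : Fin n → Bool) :
    Ev (x ∘ σ) ↔ Ev x := by
  unfold Ev; rw [aa_comp true σ hσ, aa_comp false σ hσ]

lemma sum_comp (f : (Fin n → Bool) → ℝ) (σ : Equiv.Perm (Fin n)) :
    ∑ x : Fin n → Bool, f x = ∑ x : Fin n → Bool, f (x ∘ σ) := by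
  apply (Fintype.sum_bijective (fun (y : Fin n → Bool) => y ∘ σ) ?_ _ _ (fun y => rfl)).symm
  constructor
  · intro y z h
    funext i
    have := congrFun h (σ.symm i)
    simpa using this
  · intro y
    exact ⟨y ∘ σ.symm, by funext i; simp⟩

noncomputable def cc (p : ℝ) (t : Bool) (u v : Fin n) : ℝ :=
  ∑ x : Fin n → Bool,
    if Ev x then wgt p x * ((if x u = t ∧ x v = (!t) then (1:ℝ) else 0) / (aa t x : ℝ)) else 0

lemma cc_perm (p : ℝ) (t : Bool) (σ : Equiv.Perm (Fin n)) (hσ : σ lst = lst) (u v : Fin n) :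
    cc p t u v = cc p t (σ u) (σ v) := by
  unfold cc
  rw [sum_comp _ σ]
  apply Finset.sum_congr rfl
  intro x _
  rw [wgt_comp p σ x, aa_comp t σ hσ x]
  by_cases h : Ev x
  · rw [if_pos ((Ev_comp σ hσ x).mpr h), if_pos h]
    rfl
  · rw [if_neg (fun hc => h ((Ev_comp σ hσ x).mp hc)), if_neg h]


lemma cc_swap (p : ℝ) (t : Bool) (u v u' v' : Fin n)
    (hu : u.val + 1 < n) (hv : v.val + 1 < n) (huv : u ≠ v)
    (hu' : u'.val + 1 < n) (hv' : v'.val + 1 < n) (huv' : u' ≠ v') :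
    cc p t u v = cc p t u' v' := by
  rw [lt_iff_ne_lst] at hu hv hu' hv'
  set σ₁ := Equiv.swap u u' with hσ₁
  have h1 : σ₁ u = u' := Equiv.swap_apply_left u u'
  have hne : u' ≠ σ₁ v := by
    intro hc
    exact huv (σ₁.injective (h1.trans hc))
  set σ₂ := Equiv.swap (σ₁ v) v' with hσ₂
  set σ := σ₁.trans σ₂ with hσd
  have hσu : σ u = u' := by
    show σ₂ (σ₁ u) = u'
    rw [h1]
    exact Equiv.swap_apply_of_ne_of_ne hne huv'
  have hσv : σ v = v' := by
    show σ₂ (σ₁ v) = v'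
    exact Equiv.swap_apply_left _ _
  have hσlst : σ lst = lst := by
    show σ₂ (σ₁ lst) = lst
    have e1 : σ₁ lst = lst := Equiv.swap_apply_of_ne_of_ne (Ne.symm hu) (Ne.symm hu')
    rw [e1]
    apply Equiv.swap_apply_of_ne_of_ne
    · intro hc
      apply hv
      apply σ₁.injective
      rw [← hc, e1]
    · exact Ne.symm hv'
  rw [cc_perm p t σ hσlst u v, hσu, hσv]

lemma cc_swap_single (p : ℝ) (t : Bool) (u u' : Fin n)
    (hu : u.val + 1 < n) (hu' : u'.val + 1 < n) :
    cc p t u lst = cc p t u' lst := by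
  rw [lt_iff_ne_lst] at hu hu'
  have hσlst : (Equiv.swap u u') lst = lst :=
    Equiv.swap_apply_of_ne_of_ne (Ne.symm hu) (Ne.symm hu')
  rw [cc_perm p t (Equiv.swap u u') hσlst u lst, Equiv.swap_apply_left, hσlst]

lemma card_F : (F n).card = n - 1 := by
  have : F n = Finset.univ.erase lst := by
    unfold F
    rw [← Finset.filter_ne']
    apply filter_congr
    intro j _
    simp [lt_iff_ne_lst]
  rw [this, Finset.card_erase_of_mem (mem_univ _), card_univ, Fintype.card_fin]

lemma cc_diag (p : ℝ) (t : Bool) (u : Fin n) : cc p t u u = 0 := by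
  unfold cc
  apply Finset.sum_eq_zero
  intro x _
  by_cases h : Ev x
  · rw [if_pos h]
    have : ¬ (x u = t ∧ x u = (!t)) := by
      rintro ⟨h1, h2⟩
      rw [h1] at h2
      simp at h2
    rw [if_neg this]
    simp
  · rw [if_neg h]


def preLst (hn : 2 < n) : Fin n := ⟨n - 2, by omega⟩

lemma preLst_add_one (hn : 2 < n) : preLst hn + 1 = lst := by
  apply Fin.ext
  rw [add_one_val _ (by simp [preLst]; omega)]
  simp [preLst, lst]
  omega

lemma F2_eq (hn : 2 < n) :
    Finset.univ.filter (fun j : Fin n => j.val + 2 < n) = (F n).erase (preLst hn) := by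
  ext j
  have := j.isLt
  simp only [mem_filter, mem_univ, true_and, mem_erase, F, Ne, Fin.ext_iff, preLst]
  omega

lemma preLst_mem_F (hn : 2 < n) : preLst hn ∈ F n := by
  simp only [F, mem_filter, mem_univ, true_and, preLst]
  omega

lemma card_F2 (hn : 2 < n) :
    (Finset.univ.filter (fun j : Fin n => j.val + 2 < n)).card = n - 2 := by
  rw [F2_eq hn, Finset.card_erase_of_mem (preLst_mem_F hn), card_F]
  omega

lemma F_split (hn : 2 < n) (f : Fin n → ℝ) :
    ∑ j ∈ F n, f j
      = (∑ j ∈ Finset.univ.filter (fun j : Fin n => j.val + 2 < n), f j) + f (preLst hn) := by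
  rw [F2_eq hn, add_comm, Finset.add_sum_erase _ f (preLst_mem_F hn)]

lemma indicator_sum_F (x : Fin n → Bool) (t : Bool) :
    ∑ u ∈ F n, (if x u = t then (1:ℝ) else 0) = (aa t x : ℝ) := by
  rw [Finset.sum_boole]
  norm_cast

lemma pair_ind (x : Fin n → Bool) (t : Bool) :
    ∑ u ∈ F n, ∑ v ∈ F n, (if x u = t ∧ x v = (!t) then (1:ℝ) else 0)
      = (aa t x : ℝ) * (aa (!t) x : ℝ) := by
  have h : ∀ u v : Fin n, (if x u = t ∧ x v = (!t) then (1:ℝ) else 0)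
      = (if x u = t then (1:ℝ) else 0) * (if x v = (!t) then (1:ℝ) else 0) := by
    intro u v
    by_cases h1 : x u = t <;> by_cases h2 : x v = (!t) <;> simp [h1, h2]
  simp_rw [h, ← Finset.mul_sum, ← Finset.sum_mul, indicator_sum_F]

lemma single_ind (x : Fin n → Bool) (t : Bool) :
    ∑ u ∈ F n, (if x u = t ∧ x lst = (!t) then (1:ℝ) else 0)
      = (aa t x : ℝ) * (if x lst = (!t) then (1:ℝ) else 0) := by
  by_cases h : x lst = (!t)
  · simp only [h, and_true]
    rw [indicator_sum_F]
    simp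
  · simp [h]

lemma aa_pos (t : Bool) (x : Fin n → Bool) (h : Ev x) : 0 < aa t x := by
  cases t
  · exact h.2
  · exact h.1

lemma aa_cast_ne (t : Bool) (x : Fin n → Bool) (h : Ev x) : (aa t x : ℝ) ≠ 0 :=
  Nat.cast_ne_zero.mpr (aa_pos t x h).ne'

lemma sum_cc_pairs (p : ℝ) (t : Bool) :
    ∑ u ∈ F n, ∑ v ∈ F n, cc p t u v
      = ∑ x : Fin n → Bool, (if Ev x then wgt p x * (aa (!t) x : ℝ) else 0) := by
  unfold cc
  rw [Finset.sum_congr rfl (fun u _ => Finset.sum_comm), Finset.sum_comm]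
  apply Finset.sum_congr rfl
  intro x _
  by_cases h : Ev x
  · simp only [if_pos h]
    simp only [← Finset.mul_sum, ← Finset.sum_div]
    rw [pair_ind, mul_comm (aa t x : ℝ), mul_div_assoc,
      div_self (aa_cast_ne t x h), mul_one]
  · simp [h]

lemma sum_cc_lst (p : ℝ) (t : Bool) :
    ∑ u ∈ F n, cc p t u lst
      = ∑ x : Fin n → Bool,
          (if Ev x then wgt p x * (if x lst = (!t) then (1:ℝ) else 0) else 0) := by
  unfold cc
  rw [Finset.sum_comm]
  apply Finset.sum_congr rfl
  intro x _
  by_cases h : Ev x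
  · simp only [if_pos h]
    simp only [← Finset.mul_sum, ← Finset.sum_div]
    rw [single_ind, mul_comm (aa t x : ℝ), mul_div_assoc,
      div_self (aa_cast_ne t x h), mul_one]
  · simp [h]

lemma T_as_cc (p : ℝ) (t : Bool) :
    (∑ x : Fin n → Bool,
        if Ev x then wgt p x * ((cnt t (!t) x : ℝ) / (aa t x : ℝ)) else 0)
      = ∑ j ∈ F n, cc p t j (j + 1) := by
  unfold cc
  rw [Finset.sum_comm]
  apply Finset.sum_congr rfl
  intro x _
  by_cases h : Ev x
  · simp only [if_pos h]
    have hc : (cnt t (!t) x : ℝ)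
        = ∑ j ∈ F n, (if x j = t ∧ x (j + 1) = (!t) then (1:ℝ) else 0) := by
      rw [Finset.sum_boole]; norm_cast
    rw [hc]
    simp only [← Finset.mul_sum, ← Finset.sum_div]
  · simp [h]


lemma T_eq (hn : 2 < n) (p : ℝ) (t : Bool) :
    (∑ x : Fin n → Bool, if Ev x then wgt p x * ((cnt t (!t) x : ℝ) / (aa t x : ℝ)) else 0)
      = ((∑ x : Fin n → Bool, if Ev x then wgt p x * (aa (!t) x : ℝ) else 0)
        + (∑ x : Fin n → Bool,
            if Ev x then wgt p x * (if x lst = (!t) then (1:ℝ) else 0) else 0))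
        / ((n:ℝ) - 1) := by
  have hn1 : ((n:ℝ) - 1) ≠ 0 := by
    have : (2:ℝ) < n := by exact_mod_cast hn
    intro h; nlinarith
  have hn2 : ((n:ℝ) - 2) ≠ 0 := by
    have : (2:ℝ) < n := by exact_mod_cast hn
    intro h; nlinarith
  set u0 : Fin n := ⟨0, by omega⟩ with hu0
  set v0 : Fin n := ⟨1, by omega⟩ with hv0
  have hu0' : u0.val + 1 < n := by simp [hu0]; omega
  have hv0' : v0.val + 1 < n := by simp [hv0]; omega
  have hu0v0 : u0 ≠ v0 := by simp [hu0, hv0, Fin.ext_iff]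
  set c0 := cc p t u0 v0 with hc0
  have hpre : (preLst hn).val + 1 < n := by simp [preLst]; omega
  -- row sums
  have hrow : ∀ u ∈ F n, ∑ v ∈ F n, cc p t u v = ((n:ℝ) - 2) * c0 := by
    intro u hu
    have hu' : u.val + 1 < n := by simpa [F] using hu
    have hconst : ∀ v ∈ (F n).erase u, cc p t u v = c0 := by
      intro v hv
      obtain ⟨hvu, hvF⟩ := Finset.mem_erase.mp hv
      have hv' : v.val + 1 < n := by simpa [F] using hvF
      exact cc_swap p t u v u0 v0 hu' hv' (Ne.symm hvu) hu0' hv0' hu0v0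
    rw [← Finset.add_sum_erase (F n) (fun v => cc p t u v) hu, cc_diag, zero_add,
      Finset.sum_congr rfl hconst, Finset.sum_const, Finset.card_erase_of_mem hu, card_F,
      nsmul_eq_mul]
    have h2 : n - 1 - 1 = n - 2 := by omega
    rw [h2]
    push_cast [Nat.cast_sub (by omega : 2 ≤ n)]
    ring
  have e1 : (∑ x : Fin n → Bool, if Ev x then wgt p x * (aa (!t) x : ℝ) else 0)
      = ((n:ℝ) - 1) * (((n:ℝ) - 2) * c0) := by
    rw [← sum_cc_pairs p t, Finset.sum_congr rfl hrow, Finset.sum_const, card_F,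
      nsmul_eq_mul]
    push_cast [Nat.cast_sub (by omega : 1 ≤ n)]
    ring
  have e2 : (∑ x : Fin n → Bool,
        if Ev x then wgt p x * (if x lst = (!t) then (1:ℝ) else 0) else 0)
      = ((n:ℝ) - 1) * cc p t (preLst hn) lst := by
    rw [← sum_cc_lst p t,
      Finset.sum_congr rfl (fun u hu => cc_swap_single p t u (preLst hn)
        (by simpa [F] using hu) hpre),
      Finset.sum_const, card_F, nsmul_eq_mul]
    push_cast [Nat.cast_sub (by omega : 1 ≤ n)]
    ring
  have hconst2 : ∀ j ∈ Finset.univ.filter (fun j : Fin n => j.val + 2 < n),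
      cc p t j (j + 1) = c0 := by
    intro j hj
    have hj2 : j.val + 2 < n := by simpa using (Finset.mem_filter.mp hj).2
    have hj' : j.val + 1 < n := by omega
    have hj1' : (j + 1).val + 1 < n := by rw [add_one_val j hj']; omega
    have hjne : j ≠ j + 1 := by
      intro hc
      have := congrArg Fin.val hc
      rw [add_one_val j hj'] at this
      omega
    exact cc_swap p t j (j + 1) u0 v0 hj' hj1' hjne hu0' hv0' hu0v0
  rw [T_as_cc, F_split hn (fun j => cc p t j (j + 1)), preLst_add_one hn,
    Finset.sum_congr rfl hconst2, Finset.sum_const, card_F2 hn, nsmul_eq_mul, e1, e2]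
  push_cast [Nat.cast_sub (by omega : 2 ≤ n)]
  field_simp


lemma aa_total (x : Fin n → Bool) : aa true x + aa false x = n - 1 := by
  unfold aa
  have h : (F n).filter (fun j => x j = false) = (F n).filter (fun j => ¬ (x j = true)) := by
    apply filter_congr; intro j _; simp
  rw [h, Finset.card_filter_add_card_filter_not, card_F]

lemma wgt_pos (p : ℝ) (hp : 0 < p) (hp1 : p < 1) (x : Fin n → Bool) : 0 < wgt p x := by
  unfold wgt
  apply Finset.prod_pos
  intro i _
  by_cases h : x i <;> simp [h] <;> linarith

end MS

open MS

/-- The expected difference between the proportion of successes on trials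
immediately following a success and the proportion of successes on trials
immediately following a failure, conditional on both being defined, is -1/(n-1). -/
theorem stmt5 (n : ℕ) (hn : 2 < n) (p : ℝ) (hp : 0 < p) (hp1 : p < 1) :
    (∑ x : Fin n → Bool,
        if (streakSet 1 x).Nonempty ∧ (streakSet 1 (fun i => !x i)).Nonempty then
          wgt p x * (phat 1 x - (1 - phat 1 (fun i => !x i))) else 0) /
    (∑ x : Fin n → Bool,
        if (streakSet 1 x).Nonempty ∧ (streakSet 1 (fun i => !x i)).Nonempty then
          wgt p x else 0)
      = -(1 / ((n : ℝ) - 1)) := by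
  haveI : NeZero n := ⟨by omega⟩
  have h2r : (2:ℝ) < n := by exact_mod_cast hn
  have hn1 : ((n:ℝ) - 1) ≠ 0 := by intro h; nlinarith
  have hden : (∑ x : Fin n → Bool,
      if (streakSet 1 x).Nonempty ∧ (streakSet 1 (fun i => !x i)).Nonempty then
        wgt p x else 0)
      = ∑ x : Fin n → Bool, if Ev x then wgt p x else 0 :=
    Finset.sum_congr rfl (fun x _ => if_congr (event_iff x) rfl rfl)
  have hSpos : 0 < ∑ x : Fin n → Bool, if Ev x then wgt p x else 0 := by
    have hterm : ∀ x : Fin n → Bool, 0 ≤ if Ev x then wgt p x else 0 := by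
      intro x; by_cases h : Ev x
      · rw [if_pos h]; exact (wgt_pos p hp hp1 x).le
      · rw [if_neg h]
    set x0 : Fin n → Bool := fun j => decide (j.val = 0) with hx0
    have hEv : Ev x0 := by
      constructor
      · apply Finset.card_pos.mpr
        exact ⟨⟨0, by omega⟩, by simp [F, hx0]; omega⟩
      · apply Finset.card_pos.mpr
        exact ⟨⟨1, by omega⟩, by simp [F, hx0]; omega⟩
    calc (0:ℝ) < (if Ev x0 then wgt p x0 else 0) := by
          rw [if_pos hEv]; exact wgt_pos p hp hp1 x0
      _ ≤ _ := Finset.single_le_sum (fun x _ => hterm x) (Finset.mem_univ x0)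
  have hpt : ∀ x : Fin n → Bool,
      (if (streakSet 1 x).Nonempty ∧ (streakSet 1 (fun i => !x i)).Nonempty then
          wgt p x * (phat 1 x - (1 - phat 1 (fun i => !x i))) else 0)
        = (if Ev x then wgt p x else 0)
          - (if Ev x then wgt p x * ((cnt true false x : ℝ) / (aa true x : ℝ)) else 0)
          - (if Ev x then wgt p x * ((cnt false true x : ℝ) / (aa false x : ℝ)) else 0) := by
    intro x
    by_cases h : Ev x
    · rw [if_pos ((event_iff x).mpr h), if_pos h, if_pos h, if_pos h, pointwise x h]
      ring
    · rw [if_neg (fun hc => h ((event_iff x).mp hc)), if_neg h, if_neg h, if_neg h]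
      ring
  have hT1 := T_eq hn p true
  have hT2 := T_eq hn p false
  simp only [Bool.not_true] at hT1
  simp only [Bool.not_false] at hT2
  have hkey : ((∑ x : Fin n → Bool, if Ev x then wgt p x * (aa false x : ℝ) else 0)
        + (∑ x : Fin n → Bool,
            if Ev x then wgt p x * (if x lst = false then (1:ℝ) else 0) else 0))
      + ((∑ x : Fin n → Bool, if Ev x then wgt p x * (aa true x : ℝ) else 0)
        + (∑ x : Fin n → Bool,
            if Ev x then wgt p x * (if x lst = true then (1:ℝ) else 0) else 0))
      = (n:ℝ) * ∑ x : Fin n → Bool, if Ev x then wgt p x else 0 := by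
    rw [Finset.mul_sum, ← Finset.sum_add_distrib, ← Finset.sum_add_distrib,
      ← Finset.sum_add_distrib]
    apply Finset.sum_congr rfl
    intro x _
    by_cases h : Ev x
    · simp only [if_pos h]
      have htot : (aa true x : ℝ) + (aa false x : ℝ) = (n:ℝ) - 1 := by
        have := aa_total x
        have h1 : ((aa true x + aa false x : ℕ) : ℝ) = ((n - 1 : ℕ) : ℝ) :=
          congrArg (Nat.cast : ℕ → ℝ) this
        push_cast [Nat.cast_sub (by omega : 1 ≤ n)] at h1
        linarith
      have hind : (if x lst = false then (1:ℝ) else 0) + (if x lst = true then (1:ℝ) else 0)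
          = 1 := by
        cases hxl : x lst <;> simp
      linear_combination wgt p x * htot + wgt p x * hind
    · simp [h]
  rw [hden, Finset.sum_congr rfl (fun x _ => hpt x), Finset.sum_sub_distrib,
    Finset.sum_sub_distrib, hT1, hT2]
  set S := ∑ x : Fin n → Bool, if Ev x then wgt p x else 0 with hSdef
  set A1 := ∑ x : Fin n → Bool, if Ev x then wgt p x * (aa false x : ℝ) else 0 with hA1
  set A2 := ∑ x : Fin n → Bool,
      if Ev x then wgt p x * (if x lst = false then (1:ℝ) else 0) else 0 with hA2
  set B1 := ∑ x : Fin n → Bool, if Ev x then wgt p x * (aa true x : ℝ) else 0 with hB1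
  set B2 := ∑ x : Fin n → Bool,
      if Ev x then wgt p x * (if x lst = true then (1:ℝ) else 0) else 0 with hB2
  rw [div_eq_iff hSpos.ne']
  field_simp
  linarith [hkey]
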